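/- Let n, m, q, t be positive integers with m q^t ≤ n, let 0 < δ, ε with δ + ε ≤ 1, and A ⊆ {1,...,n} with |A| = δn. Suppose |{1 ≤ b ≤ n - mq^t : |A ∩ 𝔸_m(b,q^t)| ≥ (δ+ε)m}| < εn, where 𝔸_m(b,d) = {b, b+d, ..., b+(m-1)d}. Then ∑_{b=1}^{n-mq^t} | |A ∩ 𝔸_m(b,q^t)| - δm | ≤ 4εnm + 4m²q^t. -/

import Mathlib

open Finset

private def pcount (A : Finset ℕ) (m d b : ℕ) : ℕ :=
  (A ∩ (Finset.range m).image fun c => b + c * d).card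

set_option maxHeartbeats 1000000 in
theorem l1_deviation_of_progression_counts (n m q t : ℕ) (hn : 0 < n) (hm : 0 < m)
    (hq : 0 < q) (ht : 0 < t) (hmq : m * q ^ t ≤ n)
    (δ ε : ℝ) (hδ : 0 < δ) (hε : 0 < ε) (hδε : δ + ε ≤ 1)
    (A : Finset ℕ) (hA : A ⊆ Finset.Icc 1 n) (hcard : (A.card : ℝ) = δ * n)
    (hfew : (((Finset.Icc 1 (n - m * q ^ t)).filter fun b =>
        (δ + ε) * m ≤ ((A ∩ (Finset.range m).image fun c => b + c * q ^ t).card : ℝ)).card : ℝ)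
        < ε * n) :
    (∑ b ∈ Finset.Icc 1 (n - m * q ^ t),
        |((A ∩ (Finset.range m).image fun c => b + c * q ^ t).card : ℝ) - δ * m|) ≤
      4 * ε * n * m + 4 * m ^ 2 * q ^ t := by
  set d := q ^ t with hd
  have hrw : ∀ b : ℕ, ((A ∩ (Finset.range m).image fun c => b + c * d).card) = pcount A m d b :=
    fun _ => rfl
  simp only [hrw] at hfew ⊢
  set N := n - m * d with hN
  have hdpos : 0 < d := pow_pos hq t
  have hNdn : N + m * d = n := Nat.sub_add_cancel hmq
  -- pointwise bound
  have hfle : ∀ b, pcount A m d b ≤ m := by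
    intro b
    calc pcount A m d b ≤ ((Finset.range m).image fun c => b + c * d).card :=
          card_le_card inter_subset_right
      _ ≤ (Finset.range m).card := card_image_le
      _ = m := card_range m
  -- rewrite pcount as a filter over range m
  have key : ∀ b, pcount A m d b = ((Finset.range m).filter (fun c => b + c * d ∈ A)).card := by
    intro b
    have hinj : Function.Injective (fun c : ℕ => b + c * d) := by
      intro x y h
      simp only at h
      exact Nat.eq_of_mul_eq_mul_right hdpos (by omega)
    rw [pcount, inter_comm, ← filter_mem_eq_inter, Finset.filter_image,
      card_image_of_injective _ hinj]
  have swap : ∑ b ∈ Finset.Icc 1 N, pcount A m d b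
      = ∑ c ∈ Finset.range m, ((Finset.Icc 1 N).filter (fun b => b + c * d ∈ A)).card := by
    simp_rw [key, card_filter]
    exact Finset.sum_comm
  -- per-c lower bound
  have hc : ∀ c ∈ Finset.range m,
      A.card ≤ ((Finset.Icc 1 N).filter (fun b => b + c * d ∈ A)).card + m * d := by
    intro c hcm
    rw [mem_range] at hcm
    have hcd : c * d ≤ m * d := Nat.mul_le_mul_right d hcm.le
    set I := Finset.Icc (1 + c * d) (N + c * d) with hI
    have himg : ((Finset.Icc 1 N).filter (fun b => b + c * d ∈ A)).image (· + c * d) = A ∩ I := by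
      ext a
      simp only [hI, mem_image, mem_filter, mem_Icc, mem_inter]
      constructor
      · rintro ⟨b, ⟨⟨h1, h2⟩, hbA⟩, rfl⟩
        exact ⟨hbA, by omega, by omega⟩
      · rintro ⟨hAa, h1, h2⟩
        refine ⟨a - c * d, ⟨⟨by omega, by omega⟩, ?_⟩, by omega⟩
        rwa [Nat.sub_add_cancel (by omega)]
    have hIsub : I ⊆ Finset.Icc 1 n := Finset.Icc_subset_Icc (by omega) (by omega)
    have hcardI : I.card = N := by rw [hI, Nat.card_Icc]; omega
    have h1 : ((Finset.Icc 1 N).filter (fun b => b + c * d ∈ A)).card = (A ∩ I).card := by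
      rw [← himg, card_image_of_injective _ (add_left_injective (c * d))]
    have hAsub : A ⊆ (A ∩ I) ∪ (Finset.Icc 1 n \ I) := by
      intro a ha
      by_cases hai : a ∈ I
      · exact mem_union_left _ (mem_inter.2 ⟨ha, hai⟩)
      · exact mem_union_right _ (mem_sdiff.2 ⟨hA ha, hai⟩)
    have hsd : (Finset.Icc 1 n \ I).card = m * d := by
      rw [card_sdiff_of_subset hIsub, Nat.card_Icc, hcardI]; omega
    calc A.card ≤ ((A ∩ I) ∪ (Finset.Icc 1 n \ I)).card := card_le_card hAsub
      _ ≤ (A ∩ I).card + (Finset.Icc 1 n \ I).card := card_union_le _ _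
      _ = ((Finset.Icc 1 N).filter (fun b => b + c * d ∈ A)).card + m * d := by
          rw [h1, hsd]
  have hsumN : m * A.card ≤ (∑ b ∈ Finset.Icc 1 N, pcount A m d b) + m * (m * d) := by
    calc m * A.card = ∑ _c ∈ Finset.range m, A.card := by
          rw [Finset.sum_const, card_range, smul_eq_mul]
      _ ≤ ∑ c ∈ Finset.range m,
            (((Finset.Icc 1 N).filter (fun b => b + c * d ∈ A)).card + m * d) :=
          Finset.sum_le_sum hc
      _ = (∑ c ∈ Finset.range m, ((Finset.Icc 1 N).filter (fun b => b + c * d ∈ A)).card)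
            + m * (m * d) := by
          rw [Finset.sum_add_distrib, Finset.sum_const, card_range, smul_eq_mul]
      _ = (∑ b ∈ Finset.Icc 1 N, pcount A m d b) + m * (m * d) := by rw [swap]
  -- real versions
  have hNn : (N : ℝ) + m * d = n := by exact_mod_cast hNdn
  have hsumR : δ * n * m - m ^ 2 * d ≤ ∑ b ∈ Finset.Icc 1 N, (pcount A m d b : ℝ) := by
    have h' : (m : ℝ) * A.card ≤ (∑ b ∈ Finset.Icc 1 N, (pcount A m d b : ℝ)) + m * (m * d) := by
      exact_mod_cast hsumN
    rw [hcard] at h'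
    nlinarith [h']
  -- the positive part sum
  have hIccN : (Finset.Icc 1 N).card = N := by rw [Nat.card_Icc]; omega
  have hsplit := Finset.sum_filter_add_sum_filter_not (Finset.Icc 1 N)
    (fun b => (δ + ε) * m ≤ (pcount A m d b : ℝ))
    (fun b => max ((pcount A m d b : ℝ) - δ * m) 0)
  have hmnn : (0:ℝ) ≤ m := Nat.cast_nonneg m
  have hb1 : ∑ b ∈ (Finset.Icc 1 N).filter (fun b => (δ + ε) * m ≤ (pcount A m d b : ℝ)), max ((pcount A m d b : ℝ) - δ * m) 0
      ≤ ε * n * m := by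
    have h1 : ∀ b ∈ (Finset.Icc 1 N).filter (fun b => (δ + ε) * m ≤ (pcount A m d b : ℝ)), max ((pcount A m d b : ℝ) - δ * m) 0 ≤ m := by
      intro b _
      refine max_le ?_ hmnn
      have := hfle b
      have h2 : (pcount A m d b : ℝ) ≤ m := by exact_mod_cast this
      nlinarith
    calc ∑ b ∈ (Finset.Icc 1 N).filter (fun b => (δ + ε) * m ≤ (pcount A m d b : ℝ)), max ((pcount A m d b : ℝ) - δ * m) 0
        ≤ ((Finset.Icc 1 N).filter (fun b => (δ + ε) * m ≤ (pcount A m d b : ℝ))).card • (m : ℝ) := Finset.sum_le_card_nsmul _ _ _ h1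
      _ = ((Finset.Icc 1 N).filter (fun b => (δ + ε) * m ≤ (pcount A m d b : ℝ))).card * m := by rw [nsmul_eq_mul]
      _ ≤ ε * n * m := by
          refine mul_le_mul_of_nonneg_right ?_ hmnn
          exact hfew.le
  have hb2 : ∑ b ∈ (Finset.Icc 1 N).filter (fun b => ¬ (δ + ε) * m ≤ (pcount A m d b : ℝ)),
      max ((pcount A m d b : ℝ) - δ * m) 0 ≤ ε * n * m := by
    have hεm : (0:ℝ) ≤ ε * m := by positivity
    have h1 : ∀ b ∈ (Finset.Icc 1 N).filter (fun b => ¬ (δ + ε) * m ≤ (pcount A m d b : ℝ)),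
        max ((pcount A m d b : ℝ) - δ * m) 0 ≤ ε * m := by
      intro b hb
      rw [mem_filter] at hb
      have h2 : (pcount A m d b : ℝ) < (δ + ε) * m := not_le.1 hb.2
      refine max_le (by nlinarith) hεm
    calc ∑ b ∈ (Finset.Icc 1 N).filter (fun b => ¬ (δ + ε) * m ≤ (pcount A m d b : ℝ)),
          max ((pcount A m d b : ℝ) - δ * m) 0
        ≤ ((Finset.Icc 1 N).filter (fun b => ¬ (δ + ε) * m ≤ (pcount A m d b : ℝ))).card • (ε * m) :=
          Finset.sum_le_card_nsmul _ _ _ h1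
      _ = ((Finset.Icc 1 N).filter (fun b => ¬ (δ + ε) * m ≤ (pcount A m d b : ℝ))).card * (ε * m) := by rw [nsmul_eq_mul]
      _ ≤ n * (ε * m) := by
          refine mul_le_mul_of_nonneg_right ?_ hεm
          have h3 : ((Finset.Icc 1 N).filter (fun b => ¬ (δ + ε) * m ≤ (pcount A m d b : ℝ))).card ≤ N :=
            (card_filter_le _ _).trans (le_of_eq hIccN)
          have h4 : (N:ℝ) ≤ n := by nlinarith [hNn, mul_nonneg hmnn (Nat.cast_nonneg d)]
          exact le_trans (by exact_mod_cast h3) h4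
      _ = ε * n * m := by ring
  have hmax : ∑ b ∈ Finset.Icc 1 N, max ((pcount A m d b : ℝ) - δ * m) 0 ≤ 2 * (ε * n * m) := by
    rw [← hsplit]; linarith
  -- total signed sum
  have hT : ∑ b ∈ Finset.Icc 1 N, ((pcount A m d b : ℝ) - δ * m)
      ≥ -(m ^ 2 * d) := by
    rw [Finset.sum_sub_distrib, Finset.sum_const, hIccN, nsmul_eq_mul]
    have hnN : ((n:ℕ):ℝ) = (N:ℝ) + m * d := by linarith [hNn]
    rw [hnN] at hsumR
    have hδm2d : (0:ℝ) ≤ δ * ((m:ℝ) * ((m:ℝ) * d)) := by positivity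
    nlinarith [hsumR, hδm2d]
  have habs : ∀ x : ℝ, |x| = 2 * max x 0 - x := by
    intro x
    rcases le_total 0 x with h | h
    · rw [abs_of_nonneg h, max_eq_left h]; ring
    · rw [abs_of_nonpos h, max_eq_right h]; ring
  have hfinal : ∑ b ∈ Finset.Icc 1 N, |((pcount A m d b : ℝ)) - δ * m|
      ≤ 4 * (ε * n * m) + m ^ 2 * d := by
    calc ∑ b ∈ Finset.Icc 1 N, |((pcount A m d b : ℝ)) - δ * m|
        = 2 * (∑ b ∈ Finset.Icc 1 N, max ((pcount A m d b : ℝ) - δ * m) 0)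
          - ∑ b ∈ Finset.Icc 1 N, ((pcount A m d b : ℝ) - δ * m) := by
          rw [Finset.mul_sum, ← Finset.sum_sub_distrib]
          exact Finset.sum_congr rfl fun b _ => habs _
      _ ≤ 4 * (ε * n * m) + m ^ 2 * d := by linarith
  have hdc : ((d : ℕ) : ℝ) = (q : ℝ) ^ t := by rw [hd]; push_cast; ring
  have hm2d : (0:ℝ) ≤ (m:ℝ) ^ 2 * d := by positivity
  calc ∑ b ∈ Finset.Icc 1 N, |((pcount A m d b : ℝ)) - δ * m|
      ≤ 4 * (ε * n * m) + m ^ 2 * d := hfinal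
    _ ≤ 4 * ε * n * m + 4 * m ^ 2 * (q:ℝ) ^ t := by rw [← hdc]; nlinarith [hm2d]
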